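/- arXiv:1609.03053 — 2 statements merged into one kernel-verified Lean document; each statement's English description precedes it below -/
import Mathlib

section
/- For the 1d2v system, the quantity C(X, d) = ḡ^T Λ⁰(X)^T Mq 𝟙 + ḡ^T G^T M1 d is conserved along solutions of the semi-discrete equations Ẋ = V₁ and M1 ḋ = -Λ¹(X)^T Mq V₁, for any fixed vector ḡ ∈ R^{N0}, assuming the compatibility relation Λ¹(x) G = d/dx Λ⁰(x) holds for each particle position (i.e., the gradient of the degree-p spline evaluated at x equals the sum over the discrete-gradient matrix of degree-(p-1) splines at x). -/
open Matrix

/-- Conservation of the discrete Gauss-law Casimir in the 1d2v system: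
`C(X,d) = ḡᵀ Λ⁰(X)ᵀ Mq 𝟙 + ḡᵀ Gᵀ M1 d` is conserved along solutions of
`Ẋ = V₁`, `M1 ḋ = -Λ¹(X)ᵀ Mq V₁`, assuming the compatibility relation
`∑ i, G i j Λ¹ᵢ(x) = d/dx Λ⁰ⱼ(x)`. -/
theorem discrete_casimir_conserved_1d2v
    {Np N0 N1 : ℕ}
    (G : Matrix (Fin N1) (Fin N0) ℝ)
    (M1 : Matrix (Fin N1) (Fin N1) ℝ) (hM1sym : M1ᵀ = M1) (hM1inv : IsUnit M1)
    (q : Fin Np → ℝ)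
    (Λ0 : ℝ → Fin N0 → ℝ) (Λ1 : ℝ → Fin N1 → ℝ)
    (hcompat : ∀ (x : ℝ) (j : Fin N0),
      HasDerivAt (fun y => Λ0 y j) (∑ i, G i j * Λ1 x i) x)
    (gbar : Fin N0 → ℝ)
    (X V1 : ℝ → Fin Np → ℝ) (d d' : ℝ → Fin N1 → ℝ)
    (hX : ∀ t a, HasDerivAt (fun s => X s a) (V1 t a) t)
    (hd : ∀ t, HasDerivAt d (d' t) t)
    (hAmpere : ∀ t, M1.mulVec (d' t)
      = fun i => -∑ a, Λ1 (X t a) i * q a * V1 t a) :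
    ∀ t, (gbar ⬝ᵥ fun j => ∑ a, Λ0 (X t a) j * q a)
          + gbar ⬝ᵥ Gᵀ.mulVec (M1.mulVec (d t))
        = (gbar ⬝ᵥ fun j => ∑ a, Λ0 (X 0 a) j * q a)
          + gbar ⬝ᵥ Gᵀ.mulVec (M1.mulVec (d 0)) := by
  set F : ℝ → ℝ := fun t =>
    ∑ j, gbar j * ((∑ a, Λ0 (X t a) j * q a) + ∑ i, G i j * ∑ k, M1 i k * d t k)
    with hF
  have hdk : ∀ t k, HasDerivAt (fun s => d s k) (d' t k) t := by
    intro t k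
    exact (hasDerivAt_pi.mp (hd t)) k
  have hderiv : ∀ t, HasDerivAt F
      (∑ j, gbar j * ((∑ a, ((∑ i, G i j * Λ1 (X t a) i) * V1 t a) * q a)
        + ∑ i, G i j * ∑ k, M1 i k * d' t k)) t := by
    intro t
    apply HasDerivAt.fun_sum
    intro j _
    apply HasDerivAt.const_mul
    apply HasDerivAt.add
    · apply HasDerivAt.fun_sum
      intro a _
      exact (((hcompat (X t a) j).comp t (hX t a)).mul_const (q a))
    · apply HasDerivAt.fun_sum
      intro i _
      apply HasDerivAt.const_mul
      apply HasDerivAt.fun_sum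
      intro k _
      exact (hdk t k).const_mul (M1 i k)
  have hzero : ∀ t, deriv F t = 0 := by
    intro t
    rw [(hderiv t).deriv]
    have hA : ∀ i, (∑ k, M1 i k * d' t k) = -∑ a, Λ1 (X t a) i * q a * V1 t a := by
      intro i
      have := congrFun (hAmpere t) i
      simpa [Matrix.mulVec, dotProduct] using this
    have : ∀ j, ((∑ a, ((∑ i, G i j * Λ1 (X t a) i) * V1 t a) * q a)
        + ∑ i, G i j * ∑ k, M1 i k * d' t k) = 0 := by
      intro j
      simp only [hA, Finset.sum_mul, mul_neg, Finset.mul_sum]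
      rw [Finset.sum_comm (f := fun a i => G i j * Λ1 (X t a) i * V1 t a * q a),
        ← Finset.sum_add_distrib]
      refine Finset.sum_eq_zero fun i _ => ?_
      rw [← Finset.sum_neg_distrib, ← Finset.sum_add_distrib]
      refine Finset.sum_eq_zero fun a _ => ?_
      ring
    simp only [this, mul_zero, Finset.sum_const_zero]
  have hconst : ∀ t, F t = F 0 := by
    intro t
    exact is_const_of_deriv_eq_zero (fun s => (hderiv s).differentiableAt) hzero t 0
  intro t
  have key : ∀ s, (gbar ⬝ᵥ fun j => ∑ a, Λ0 (X s a) j * q a)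
      + gbar ⬝ᵥ Gᵀ.mulVec (M1.mulVec (d s)) = F s := by
    intro s
    simp [hF, dotProduct, Matrix.mulVec, Matrix.transpose_apply, mul_add,
      Finset.sum_add_distrib]
  rw [key t, key 0, hconst t]
end

section
/- For the semi-discrete Vlasov–Maxwell ODE system Ẋ = V, Mp V̇ = Mq(Λ(X) e + B(X,b) V), M₁ ė = C^T M₂ b - Λ(X)^T Mq V, ḃ = -C e, the discrete energy H = ½ V^T Mp V + ½ e^T M₁ e + ½ b^T M₂ b is conserved (dH/dt = 0), provided B(X,b) is antisymmetric for every (X,b) and Mp, Mq are diagonal (hence Mq B is antisymmetric whenever B is, after appropriate symmetric weighting: specifically V^T Mq B(X,b) V = 0). -/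
open Matrix

lemma quad_hasDerivAt {n : ℕ} (M : Matrix (Fin n) (Fin n) ℝ)
    (f : ℝ → Fin n → ℝ) (w : Fin n → ℝ) (t : ℝ) (hf : HasDerivAt f w t) :
    HasDerivAt (fun s => f s ⬝ᵥ M.mulVec (f s))
      (w ⬝ᵥ M.mulVec (f t) + f t ⬝ᵥ M.mulVec w) t := by
  have hc : ∀ i, HasDerivAt (fun s => f s i) (w i) t := fun i =>
    (hasDerivAt_pi.mp hf) i
  have h : HasDerivAt (fun s => ∑ i, f s i * ∑ k, M i k * f s k)
      (∑ i, (w i * ∑ k, M i k * f t k + f t i * ∑ k, M i k * w k)) t := by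
    apply HasDerivAt.fun_sum
    intro i _
    exact (hc i).mul (HasDerivAt.fun_sum fun k _ => (hc k).const_mul (M i k))
  simpa [dotProduct, mulVec, Finset.sum_add_distrib] using h

lemma dot_symm {n : ℕ} {M : Matrix (Fin n) (Fin n) ℝ} (hM : Mᵀ = M)
    (x y : Fin n → ℝ) : x ⬝ᵥ M.mulVec y = y ⬝ᵥ M.mulVec x := by
  rw [dotProduct_mulVec, ← mulVec_transpose, hM, dotProduct_comm]

lemma dot_transpose {m n : ℕ} (A : Matrix (Fin m) (Fin n) ℝ)
    (x : Fin n → ℝ) (y : Fin m → ℝ) :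
    x ⬝ᵥ Aᵀ.mulVec y = A.mulVec x ⬝ᵥ y := by
  rw [dotProduct_mulVec, ← mulVec_transpose, transpose_transpose]

/-- Energy conservation for the semi-discrete Vlasov–Maxwell system:
along solutions of `Ẋ = V`, `Mp V̇ = Mq(Λ(X) e + B(X,b) V)`,
`M₁ ė = Cᵀ M₂ b - Λ(X)ᵀ Mq V`, `ḃ = -C e`, the discrete energy
`H = ½ Vᵀ Mp V + ½ eᵀ M₁ e + ½ bᵀ M₂ b` is conserved. -/
theorem discrete_energy_conserved
    {n n1 n2 : ℕ}
    (mp mq : Fin n → ℝ) (hmp : ∀ i, 0 < mp i)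
    (M1 : Matrix (Fin n1) (Fin n1) ℝ) (hM1 : M1.PosDef)
    (M2 : Matrix (Fin n2) (Fin n2) ℝ) (hM2 : M2.PosDef)
    (Λ : (Fin n → ℝ) → Matrix (Fin n) (Fin n1) ℝ)
    (B : (Fin n → ℝ) → (Fin n2 → ℝ) → Matrix (Fin n) (Fin n) ℝ)
    (hBanti : ∀ X b, (B X b)ᵀ = -(B X b))
    (hBweighted : ∀ X b (v : Fin n → ℝ),
      v ⬝ᵥ (Matrix.diagonal mq).mulVec ((B X b).mulVec v) = 0)
    (C : Matrix (Fin n2) (Fin n1) ℝ)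
    (X V V' : ℝ → Fin n → ℝ) (e e' : ℝ → Fin n1 → ℝ) (b : ℝ → Fin n2 → ℝ)
    (hX : ∀ t, HasDerivAt X (V t) t)
    (hV : ∀ t, HasDerivAt V (V' t) t)
    (hVeq : ∀ t, (Matrix.diagonal mp).mulVec (V' t)
      = (Matrix.diagonal mq).mulVec
          ((Λ (X t)).mulVec (e t) + (B (X t) (b t)).mulVec (V t)))
    (he : ∀ t, HasDerivAt e (e' t) t)
    (heeq : ∀ t, M1.mulVec (e' t)
      = Cᵀ.mulVec (M2.mulVec (b t))
        - (Λ (X t))ᵀ.mulVec ((Matrix.diagonal mq).mulVec (V t)))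
    (hb : ∀ t, HasDerivAt b (-(C.mulVec (e t))) t) :
    ∀ t, HasDerivAt (fun s =>
        (1 / 2) * (V s ⬝ᵥ (Matrix.diagonal mp).mulVec (V s))
        + (1 / 2) * (e s ⬝ᵥ M1.mulVec (e s))
        + (1 / 2) * (b s ⬝ᵥ M2.mulVec (b s))) 0 t := by
  intro t
  have hMps : (Matrix.diagonal mp)ᵀ = Matrix.diagonal mp := diagonal_transpose mp
  have hMqs : (Matrix.diagonal mq)ᵀ = Matrix.diagonal mq := diagonal_transpose mq
  have hM1s : M1ᵀ = M1 := by simpa using hM1.1.eq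
  have hM2s : M2ᵀ = M2 := by simpa using hM2.1.eq
  have h1 := quad_hasDerivAt (Matrix.diagonal mp) V (V' t) t (hV t)
  have h2 := quad_hasDerivAt M1 e (e' t) t (he t)
  have h3 := quad_hasDerivAt M2 b (-(C.mulVec (e t))) t (hb t)
  have H := ((h1.const_mul (1/2 : ℝ)).add (h2.const_mul (1/2 : ℝ))).add
    (h3.const_mul (1/2 : ℝ))
  have hV2 : V t ⬝ᵥ (Matrix.diagonal mp).mulVec (V' t)
      = V t ⬝ᵥ (Matrix.diagonal mq).mulVec ((Λ (X t)).mulVec (e t)) := by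
    rw [hVeq t, mulVec_add, dotProduct_add, hBweighted (X t) (b t) (V t), add_zero]
  have he2 : e t ⬝ᵥ M1.mulVec (e' t)
      = C.mulVec (e t) ⬝ᵥ M2.mulVec (b t)
        - (Λ (X t)).mulVec (e t) ⬝ᵥ (Matrix.diagonal mq).mulVec (V t) := by
    rw [heeq t, dotProduct_sub, dot_transpose, dot_transpose]
  have hcross : V t ⬝ᵥ (Matrix.diagonal mq).mulVec ((Λ (X t)).mulVec (e t))
      = (Λ (X t)).mulVec (e t) ⬝ᵥ (Matrix.diagonal mq).mulVec (V t) :=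
    dot_symm hMqs _ _
  have hb2 : b t ⬝ᵥ M2.mulVec (C.mulVec (e t))
      = C.mulVec (e t) ⬝ᵥ M2.mulVec (b t) := dot_symm hM2s _ _
  have key : (1/2 : ℝ) * (V' t ⬝ᵥ (Matrix.diagonal mp).mulVec (V t)
        + V t ⬝ᵥ (Matrix.diagonal mp).mulVec (V' t))
      + (1/2 : ℝ) * (e' t ⬝ᵥ M1.mulVec (e t) + e t ⬝ᵥ M1.mulVec (e' t))
      + (1/2 : ℝ) * ((-(C.mulVec (e t))) ⬝ᵥ M2.mulVec (b t)
        + b t ⬝ᵥ M2.mulVec (-(C.mulVec (e t)))) = 0 := by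
    rw [dot_symm hMps (V' t) (V t), dot_symm hM1s (e' t) (e t),
      dot_symm hM2s (-(C.mulVec (e t))) (b t), hV2, he2, hcross]
    rw [mulVec_neg, dotProduct_neg, hb2]
    ring
  exact key ▸ H
end
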